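/- arXiv:1108.3429 — 5 statements merged into one kernel-verified Lean document; each statement's English description precedes it below -/
import Mathlib

section
/- (Weakening of enclosing membrane) If I ⊨^{μp μ μ₁} P and I(μp,μ,μ₁) ⊆ I(μp,μ,μ₂), and additionally I(μ,μ₁,x) ⊆ I(μ,μ₂,x) and I(μ₁,x,y) ⊆ I(μ₂,x,y) for all x,y, then I ⊨^{μp μ μ₂} P. -/
/-- Membrane processes of Brane Calculi: σ ::= 0 | σ|τ | !σ | a.σ,
with actions from an abstract type `α`. -/
inductive MProc (α : Type) : Type where
  | zero
  | par (σ τ : MProc α)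
  | repl (σ : MProc α)
  | act (a : α) (σ : MProc α)

/-- The action-collecting function A:
A(0)=∅, A(a.σ)={a}∪A(σ), A(!σ)=A(σ), A(σ₀|σ₁)=A(σ₀)∪A(σ₁). -/
def A {α : Type} : MProc α → Set α
  | .zero => ∅
  | .par σ τ => A σ ∪ A τ
  | .repl σ => A σ
  | .act a σ => {a} ∪ A σ

/-- Brane systems with labels from `M`: P ::= ◇ | P∘Q | !P | σ⟨P⟩^μ. -/
inductive Sys (α M : Type) : Type where
  | void
  | comp (P Q : Sys α M)
  | repl (P : Sys α M)
  | mem (σ : MProc α) (μ : M) (P : Sys α M)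

/-- An estimate I(μgp,μp,μ) ⊆ M ∪ Actions. -/
abbrev Estimate (α M : Type) := M → M → M → Set (M ⊕ α)

/-- The CFA judgement I ⊨^{μgp μp μ} P. -/
def Sat {α M : Type} (I : Estimate α M) : M → M → M → Sys α M → Prop
  | _, _, _, .void => True
  | gp, p, m, .comp P Q => Sat I gp p m P ∧ Sat I gp p m Q
  | gp, p, m, .repl P => Sat I gp p m P
  | gp, p, m, .mem σ μs P =>
      Sum.inl μs ∈ I gp p m ∧ (∀ a ∈ A σ, Sum.inr a ∈ I p m μs) ∧ Sat I p m μs P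

theorem sat_weak_gp {α M : Type} (I : Estimate α M) (μ₁ μ₂ : M)
    (h3 : ∀ x y, I μ₁ x y ⊆ I μ₂ x y) :
    ∀ (P : Sys α M) (x y : M), Sat I μ₁ x y P → Sat I μ₂ x y P := by
  intro P
  induction P with
  | void => intro x y _; trivial
  | comp P Q ihP ihQ => intro x y h; exact ⟨ihP x y h.1, ihQ x y h.2⟩
  | repl P ih => intro x y h; exact ih x y h
  | mem σ μs P _ => intro x y h; exact ⟨h3 x y h.1, h.2.1, h.2.2⟩

theorem sat_weak_p {α M : Type} (I : Estimate α M) (μ μ₁ μ₂ : M)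
    (h2 : ∀ x, I μ μ₁ x ⊆ I μ μ₂ x)
    (h3 : ∀ x y, I μ₁ x y ⊆ I μ₂ x y) :
    ∀ (P : Sys α M) (y : M), Sat I μ μ₁ y P → Sat I μ μ₂ y P := by
  intro P
  induction P with
  | void => intro y _; trivial
  | comp P Q ihP ihQ => intro y h; exact ⟨ihP y h.1, ihQ y h.2⟩
  | repl P ih => intro y h; exact ih y h
  | mem σ μs P _ =>
      intro y h
      exact ⟨h2 y h.1, fun a ha => h3 y μs (h.2.1 a ha),
        sat_weak_gp I μ₁ μ₂ h3 P y μs h.2.2⟩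

/-- Weakening of the enclosing membrane: if the judgement holds for P inside
μ₁, and I's entries for μ₁ (at all three nesting depths) are included in those
for μ₂, then the judgement holds for P inside μ₂. -/
theorem sat_weakening {α M : Type} (I : Estimate α M) (μp μ μ₁ μ₂ : M)
    (P : Sys α M)
    (h : Sat I μp μ μ₁ P)
    (h1 : I μp μ μ₁ ⊆ I μp μ μ₂)
    (h2 : ∀ x, I μ μ₁ x ⊆ I μ μ₂ x)
    (h3 : ∀ x y, I μ₁ x y ⊆ I μ₂ x y) :
    Sat I μp μ μ₂ P := by
  induction P with
  | void => trivial
  | comp P Q ihP ihQ => exact ⟨ihP h.1, ihQ h.2⟩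
  | repl P ih => exact ih h
  | mem σ μs P _ =>
      exact ⟨h1 h.1, fun a ha => h2 μs (h.2.1 a ha),
        sat_weak_p I μ μ₁ μ₂ h2 h3 P μs h.2.2⟩
end

section
/- (Subject Reduction for the Drip rule) Suppose I satisfies the CFA closure condition for Drip: whenever drip(ρ) ∈ I(μp,μ,μP) and μP ∈ I(μgp,μp,μ), then μR ∈ I(μgp,μp,μ) and A(ρ) ⊆ I(μp,μ,μR), where μR = MI_drip(drip(ρ),μP,μgp,μp,μ). Then if I ⊨^{μgp μp μ} (drip(ρ).σ | σ₀)⟨P₀⟩^μP, it follows that I ⊨^{μgp μp μ} ρ⟨◇⟩^μR ∘ (σ|σ₀)⟨P₀⟩^μP. -/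
/-- Subject reduction for the Drip rule. `dripρ : α` is the action drip(ρ);
`MIdrip μP μgp μp μ` is the fresh label of the dripped membrane. -/
theorem subject_reduction_drip {α M : Type} (I : Estimate α M)
    (MIdrip : M → M → M → M → M)
    (dripρ : α) (ρ σ σ₀ : MProc α) (μP μgp μp μ : M) (P₀ : Sys α M)
    (hclosure : ∀ gp p m mP : M,
      Sum.inr dripρ ∈ I p m mP → Sum.inl mP ∈ I gp p m →
      Sum.inl (MIdrip mP gp p m) ∈ I gp p m ∧
      ∀ a ∈ A ρ, Sum.inr a ∈ I p m (MIdrip mP gp p m))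
    (hsat : Sat I μgp μp μ
      (Sys.mem (MProc.par (MProc.act dripρ σ) σ₀) μP P₀)) :
    Sat I μgp μp μ
      (Sys.comp (Sys.mem ρ (MIdrip μP μgp μp μ) Sys.void)
                (Sys.mem (MProc.par σ σ₀) μP P₀)) := by
  obtain ⟨hmem, hacts, hP⟩ := hsat
  have hdrip : Sum.inr dripρ ∈ I μp μ μP :=
    hacts dripρ (Or.inl (Or.inl rfl))
  obtain ⟨h1, h2⟩ := hclosure μgp μp μ μP hdrip hmem
  refine ⟨⟨h1, h2, trivial⟩, hmem, ?_, hP⟩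
  intro a ha
  exact hacts a (ha.elim (fun h => Or.inl (Or.inr h)) Or.inr)
end

section
/- (Subject Reduction for the Mate rule) Suppose I satisfies the closure condition for Mate: whenever mate_n ∈ I(μp,μ,μP), mate_n⊥ ∈ I(μp,μ,μQ), μP,μQ ∈ I(μgp,μp,μ), and ((μp,μ,μP),(μp,μ,μQ)) ∉ R, then μPQ ∈ I(μgp,μp,μ), I(μp,μ,μP) ∪ I(μp,μ,μQ) ⊆ I(μp,μ,μPQ), I(μ,μP,x) ∪ I(μ,μQ,x) ⊆ I(μ,μPQ,x) for all x, and I(μP,x,y) ∪ I(μQ,x,y) ⊆ I(μPQ,x,y) for all x,y, where μPQ = MI_mate(mate_n,μP,mate_n⊥,μQ,μgp,μp,μ). Then if ((μp,μ,μP),(μp,μ,μQ)) ∉ R and I ⊨^{μgp μp μ} (mate_n.σ|σ₀)⟨P₀⟩^μP ∘ (mate_n⊥.τ|τ₀)⟨P₁⟩^μQ, it follows that I ⊨^{μgp μp μ} (σ|σ₀|τ|τ₀)⟨P₀∘P₁⟩^μPQ. -/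
lemma sat_weaken_gp {α M : Type} (I : Estimate α M) (μ1 μ2 p m : M)
    (h : ∀ x y, I μ1 x y ⊆ I μ2 x y) :
    ∀ P : Sys α M, Sat I μ1 p m P → Sat I μ2 p m P := by
  intro P
  induction P generalizing p m with
  | void => intro _; trivial
  | comp P Q ihP ihQ => exact fun ⟨h1, h2⟩ => ⟨ihP p m h1, ihQ p m h2⟩
  | repl P ih => exact ih p m
  | mem σ μs P ih => exact fun ⟨h1, h2, h3⟩ => ⟨h p m h1, h2, h3⟩

lemma sat_weaken_p {α M : Type} (I : Estimate α M) (μ1 μ2 g : M)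
    (h2 : ∀ y, I g μ1 y ⊆ I g μ2 y)
    (h3 : ∀ x y, I μ1 x y ⊆ I μ2 x y) :
    ∀ (m : M) (P : Sys α M), Sat I g μ1 m P → Sat I g μ2 m P := by
  intro m P
  induction P generalizing m with
  | void => intro _; trivial
  | comp P Q ihP ihQ => exact fun ⟨a, b⟩ => ⟨ihP m a, ihQ m b⟩
  | repl P ih => exact ih m
  | mem σ μs P ih =>
    rintro ⟨a, b, c⟩
    exact ⟨h2 m a, fun x hx => h3 m μs (b x hx),
      sat_weaken_gp I μ1 μ2 m μs h3 P c⟩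

lemma sat_weaken {α M : Type} (I : Estimate α M) (μ1 μ2 g p : M)
    (h1 : I g p μ1 ⊆ I g p μ2)
    (h2 : ∀ x, I p μ1 x ⊆ I p μ2 x)
    (h3 : ∀ x y, I μ1 x y ⊆ I μ2 x y) :
    ∀ P : Sys α M, Sat I g p μ1 P → Sat I g p μ2 P := by
  intro P
  induction P with
  | void => intro _; trivial
  | comp P Q ihP ihQ => exact fun ⟨a, b⟩ => ⟨ihP a, ihQ b⟩
  | repl P ih => exact ih
  | mem σ μs P ih =>
    rintro ⟨a, b, c⟩
    exact ⟨h1 a, fun x hx => h2 μs (b x hx),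
      sat_weaken_p I μ1 μ2 p h2 h3 μs P c⟩

/-- Subject reduction for the Mate rule. `mateA`/`comateA` are the actions
mate_n and mate_n⊥; `MImate μP μQ μgp μp μ` is the fresh label μPQ of the
fused membrane; `R` is the incompatibility relation. -/
theorem subject_reduction_mate {α M : Type} (I : Estimate α M)
    (MImate : M → M → M → M → M → M)
    (R : Set ((M × M × M) × (M × M × M)))
    (mateA comateA : α) (σ σ₀ τ τ₀ : MProc α)
    (μP μQ μgp μp μ : M) (P₀ P₁ : Sys α M)
    (hclosure : ∀ gp p m mP mQ : M,
      Sum.inr mateA ∈ I p m mP → Sum.inr comateA ∈ I p m mQ →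
      Sum.inl mP ∈ I gp p m → Sum.inl mQ ∈ I gp p m →
      ((p, m, mP), (p, m, mQ)) ∉ R →
      Sum.inl (MImate mP mQ gp p m) ∈ I gp p m ∧
      I p m mP ∪ I p m mQ ⊆ I p m (MImate mP mQ gp p m) ∧
      (∀ x, I m mP x ∪ I m mQ x ⊆ I m (MImate mP mQ gp p m) x) ∧
      (∀ x y, I mP x y ∪ I mQ x y ⊆ I (MImate mP mQ gp p m) x y))
    (hR : ((μp, μ, μP), (μp, μ, μQ)) ∉ R)
    (hsat : Sat I μgp μp μ
      (Sys.comp (Sys.mem (MProc.par (MProc.act mateA σ) σ₀) μP P₀)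
                (Sys.mem (MProc.par (MProc.act comateA τ) τ₀) μQ P₁))) :
    Sat I μgp μp μ
      (Sys.mem (MProc.par (MProc.par (MProc.par σ σ₀) τ) τ₀)
        (MImate μP μQ μgp μp μ) (Sys.comp P₀ P₁)) := by
  obtain ⟨⟨hP1, hP2, hP3⟩, ⟨hQ1, hQ2, hQ3⟩⟩ := hsat
  have hmate : Sum.inr mateA ∈ I μp μ μP := hP2 _ (Or.inl (Or.inl rfl))
  have hcomate : Sum.inr comateA ∈ I μp μ μQ := hQ2 _ (Or.inl (Or.inl rfl))
  obtain ⟨c1, c2, c3, c4⟩ := hclosure μgp μp μ μP μQ hmate hcomate hP1 hQ1 hR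
  set μPQ := MImate μP μQ μgp μp μ
  refine ⟨c1, ?_, ?_, ?_⟩
  · intro a ha
    rcases ha with ((ha | ha) | ha) | ha
    · exact c2 (Or.inl (hP2 _ (Or.inl (Or.inr ha))))
    · exact c2 (Or.inl (hP2 _ (Or.inr ha)))
    · exact c2 (Or.inr (hQ2 _ (Or.inl (Or.inr ha))))
    · exact c2 (Or.inr (hQ2 _ (Or.inr ha)))
  · exact sat_weaken I μP μPQ μp μ (fun s hs => c2 (Or.inl hs))
      (fun x s hs => c3 x (Or.inl hs)) (fun x y s hs => c4 x y (Or.inl hs)) P₀ hP3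
  · exact sat_weaken I μQ μPQ μp μ (fun s hs => c2 (Or.inr hs))
      (fun x s hs => c3 x (Or.inr hs)) (fun x y s hs => c4 x y (Or.inr hs)) P₁ hQ3
end

section
/- (Subject Reduction for the Bud rule) Suppose I satisfies the CFA closure condition for Bud: whenever bud_n ∈ I(μ,μQ,μP), bud_n⊥(ρ) ∈ I(μp,μ,μQ), μP ∈ I(μp,μ,μQ), and μQ ∈ I(μgp,μp,μ), then μR ∈ I(μgp,μp,μ), A(ρ) ⊆ I(μp,μ,μR), μP ∈ I(μp,μ,μR), I(μ,μQ,μP) ⊆ I(μ,μR,μP), and I(μQ,μP,x) ⊆ I(μR,μP,x) for all x, where μR = MI_bud(bud_n,μP,bud_n⊥(ρ),μQ,μgp,μp,μ). Then if I ⊨^{μgp μp μ} (bud_n⊥(ρ).τ|τ₀)⟨(bud_n.σ|σ₀)⟨P₀⟩^μP ∘ P₁⟩^μQ, it follows that I ⊨^{μgp μp μ} ρ⟨(σ|σ₀)⟨P₀⟩^μP⟩^μR ∘ (τ|τ₀)⟨P₁⟩^μQ. -/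
/-- Changing only the grandparent label. -/
theorem sat_gp_mono {α M : Type} (I : Estimate α M) (g g' p m : M)
    (h : I g p m ⊆ I g' p m) :
    ∀ P : Sys α M, Sat I g p m P → Sat I g' p m P := by
  intro P
  induction P with
  | void => intro _; trivial
  | comp P Q ihP ihQ => intro ⟨h1, h2⟩; exact ⟨ihP h1, ihQ h2⟩
  | repl P ih => exact ih
  | mem σ μs P _ => intro ⟨h1, h2, h3⟩; exact ⟨h h1, h2, h3⟩

/-- Contextual weakening: changing the parent label. -/
theorem sat_p_mono {α M : Type} (I : Estimate α M) (g p p' m : M)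
    (h1 : I g p m ⊆ I g p' m) (h2 : ∀ x, I p m x ⊆ I p' m x) :
    ∀ P : Sys α M, Sat I g p m P → Sat I g p' m P := by
  intro P
  induction P with
  | void => intro _; trivial
  | comp P Q ihP ihQ => intro ⟨a, b⟩; exact ⟨ihP a, ihQ b⟩
  | repl P ih => exact ih
  | mem σ μs P _ =>
      intro ⟨a, b, c⟩
      exact ⟨h1 a, fun x hx => h2 μs (b x hx),
        sat_gp_mono I p p' m μs (h2 μs) P c⟩

/-- Subject reduction for the Bud rule. `budA`/`cobudρ` are the actions
bud_n and bud_n⊥(ρ) (with parameter ρ); `MIbud μP μQ μgp μp μ` is the fresh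
label μR of the budded membrane. -/
theorem subject_reduction_bud {α M : Type} (I : Estimate α M)
    (MIbud : M → M → M → M → M → M)
    (budA cobudρ : α) (ρ σ σ₀ τ τ₀ : MProc α)
    (μP μQ μgp μp μ : M) (P₀ P₁ : Sys α M)
    (hclosure : ∀ gp p m mP mQ : M,
      Sum.inr budA ∈ I m mQ mP → Sum.inr cobudρ ∈ I p m mQ →
      Sum.inl mP ∈ I p m mQ → Sum.inl mQ ∈ I gp p m →
      Sum.inl (MIbud mP mQ gp p m) ∈ I gp p m ∧
      (∀ a ∈ A ρ, Sum.inr a ∈ I p m (MIbud mP mQ gp p m)) ∧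
      Sum.inl mP ∈ I p m (MIbud mP mQ gp p m) ∧
      I m mQ mP ⊆ I m (MIbud mP mQ gp p m) mP ∧
      (∀ x, I mQ mP x ⊆ I (MIbud mP mQ gp p m) mP x))
    (hsat : Sat I μgp μp μ
      (Sys.mem (MProc.par (MProc.act cobudρ τ) τ₀) μQ
        (Sys.comp (Sys.mem (MProc.par (MProc.act budA σ) σ₀) μP P₀) P₁))) :
    Sat I μgp μp μ
      (Sys.comp (Sys.mem ρ (MIbud μP μQ μgp μp μ) (Sys.mem (MProc.par σ σ₀) μP P₀))
                (Sys.mem (MProc.par τ τ₀) μQ P₁)) := by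
  obtain ⟨hQmem, hQact, ⟨hPmem, hPact, hP0⟩, hP1⟩ := hsat
  have hbud : Sum.inr budA ∈ I μ μQ μP := hPact budA (Or.inl (Or.inl rfl))
  have hcobud : Sum.inr cobudρ ∈ I μp μ μQ := hQact cobudρ (Or.inl (Or.inl rfl))
  obtain ⟨hR, hAρ, hPR, hincl1, hincl2⟩ :=
    hclosure μgp μp μ μP μQ hbud hcobud hPmem hQmem
  refine ⟨⟨hR, hAρ, hPR, ?_, ?_⟩, hQmem, ?_, hP1⟩
  · intro a ha
    exact hincl1 (hPact a (ha.elim (fun h => Or.inl (Or.inr h)) Or.inr))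
  · exact sat_p_mono I μ μQ (MIbud μP μQ μgp μp μ) μP hincl1 hincl2 P₀ hP0
  · intro a ha
    exact hQact a (ha.elim (fun h => Or.inl (Or.inr h)) Or.inr)
end

section
/- (Subject Reduction for the PEP Exo rule) Suppose I satisfies the closure condition for Exo: whenever exo_n ∈ I(μ,μQ,μP), exo_n⊥ ∈ I(μp,μ,μQ), μP ∈ I(μp,μ,μQ), and μQ ∈ I(μgp,μp,μ), then I(μ,μQ,μP) ⊆ I(μgp,μp,μ) together with the corresponding deeper-level inclusions I(μQ,μP,x) ⊆ I(μp,μ,x) and I(μP,x,y) ⊆ I(μ,x,y). Then if I ⊨^{μgp μp μ} (exo_n⊥.τ|τ₀)⟨(exo_n.σ|σ₀)⟨P⟩^μP ∘ Q⟩^μQ, it follows that I ⊨^{μgp μp μ} P ∘ (σ|σ₀|τ|τ₀)⟨Q⟩^μQ, provided additionally A(σ) ∪ A(σ₀) ⊆ I(μp,μ,μQ) is implied by the closure condition. -/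

lemma sat_mono {α M : Type} (I : Estimate α M) :
    ∀ (P : Sys α M) (gp p m gp' p' m' : M),
      I gp p m ⊆ I gp' p' m' → (∀ x, I p m x ⊆ I p' m' x) →
      (∀ x y, I m x y ⊆ I m' x y) →
      Sat I gp p m P → Sat I gp' p' m' P := by
  intro P
  induction P with
  | void => intros; trivial
  | comp P Q ihP ihQ =>
    intro gp p m gp' p' m' h1 h2 h3 h
    exact ⟨ihP _ _ _ _ _ _ h1 h2 h3 h.1, ihQ _ _ _ _ _ _ h1 h2 h3 h.2⟩
  | repl P ih =>
    intro gp p m gp' p' m' h1 h2 h3 h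
    exact ih _ _ _ _ _ _ h1 h2 h3 h
  | mem σ μs P ih =>
    intro gp p m gp' p' m' h1 h2 h3 h
    obtain ⟨hm, ha, hs⟩ := h
    exact ⟨h1 hm, fun a haA => h2 _ (ha a haA),
      ih _ _ _ _ _ _ (h2 μs) (fun x => h3 μs x) (fun _ _ => Set.Subset.rfl) hs⟩

/-- Subject reduction for the PEP Exo rule. `exoA`/`coexoA` are the actions
exo_n and exo_n⊥. The closure condition includes the requirement
A(σ) ∪ A(σ₀) ⊆ I(μp,μ,μQ) for the processes residing on the expelled
membrane, as in Table 7. -/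
theorem subject_reduction_exo {α M : Type} (I : Estimate α M)
    (exoA coexoA : α) (σ σ₀ τ τ₀ : MProc α)
    (μP μQ μgp μp μ : M) (P Q : Sys α M)
    (hclosure : ∀ gp p m mP mQ : M,
      Sum.inr exoA ∈ I m mQ mP → Sum.inr coexoA ∈ I p m mQ →
      Sum.inl mP ∈ I p m mQ → Sum.inl mQ ∈ I gp p m →
      (∀ a ∈ A σ ∪ A σ₀, Sum.inr a ∈ I p m mQ) ∧
      I m mQ mP ⊆ I gp p m ∧
      (∀ x, I mQ mP x ⊆ I p m x) ∧
      (∀ x y, I mP x y ⊆ I m x y))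
    (hsat : Sat I μgp μp μ
      (Sys.mem (MProc.par (MProc.act coexoA τ) τ₀) μQ
        (Sys.comp (Sys.mem (MProc.par (MProc.act exoA σ) σ₀) μP P) Q))) :
    Sat I μgp μp μ
      (Sys.comp P
        (Sys.mem (MProc.par (MProc.par (MProc.par σ σ₀) τ) τ₀) μQ Q)) := by
  obtain ⟨hQmem, hτA, hPQ⟩ := hsat
  obtain ⟨⟨hPmem, hσA, hP⟩, hQ⟩ := hPQ
  have hexo : Sum.inr exoA ∈ I μ μQ μP := hσA exoA (Or.inl (Or.inl rfl))
  have hcoexo : Sum.inr coexoA ∈ I μp μ μQ := hτA coexoA (Or.inl (Or.inl rfl))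
  obtain ⟨hA, h1, h2, h3⟩ := hclosure μgp μp μ μP μQ hexo hcoexo hPmem hQmem
  refine ⟨sat_mono I P μ μQ μP μgp μp μ h1 h2 h3 hP, hQmem, ?_, hQ⟩
  intro a ha
  rcases ha with (h | h) | h
  · exact hA a h
  · exact hτA a (Or.inl (Or.inr h))
  · exact hτA a (Or.inr h)
end
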